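/- Let C be a model category with a zero object and binary products and coproducts, satisfying: (i) for all cofibrant objects X and Y, the canonical morphism X ⨿ Y ⟶ X ⨯ Y (whose components are (𝟙_X, 0) out of X and (0, 𝟙_Y) out of Y) is a weak equivalence; (ii) whenever f and g are acyclic fibrations, the product morphism prod.map f g is a weak equivalence; (iii) whenever f and g are acyclic cofibrations, the coproduct morphism coprod.map f g is a weak equivalence. Suppose A and C are cofibrant objects. Then morphisms f : A ⟶ B and g : C ⟶ D are both weak equivalences if and only if the product morphism prod.map f g : A ⨯ C ⟶ B ⨯ D is a weak equivalence. -/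

import Mathlib

open CategoryTheory Limits



/-- A model structure on a category `C`: classes of weak equivalences,
fibrations and cofibrations satisfying the two-out-of-three, retract,
lifting and factorization axioms. -/
structure ModelStructure (C : Type*) [Category C] where
  weq : MorphismProperty C
  fib : MorphismProperty C
  cof : MorphismProperty C
  /-- two-out-of-three: composition -/
  weq_comp : ∀ {X Y Z : C} (f : X ⟶ Y) (g : Y ⟶ Z), weq f → weq g → weq (f ≫ g)
  /-- two-out-of-three: left cancellation -/
  weq_of_comp_left : ∀ {X Y Z : C} (f : X ⟶ Y) (g : Y ⟶ Z), weq g → weq (f ≫ g) → weq f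
  /-- two-out-of-three: right cancellation -/
  weq_of_comp_right : ∀ {X Y Z : C} (f : X ⟶ Y) (g : Y ⟶ Z), weq f → weq (f ≫ g) → weq g
  /-- weak equivalences are closed under retracts -/
  weq_retract : ∀ {f g : Arrow C} (i : f ⟶ g) (r : g ⟶ f), i ≫ r = 𝟙 f →
    weq g.hom → weq f.hom
  /-- fibrations are closed under retracts -/
  fib_retract : ∀ {f g : Arrow C} (i : f ⟶ g) (r : g ⟶ f), i ≫ r = 𝟙 f →
    fib g.hom → fib f.hom
  /-- cofibrations are closed under retracts -/
  cof_retract : ∀ {f g : Arrow C} (i : f ⟶ g) (r : g ⟶ f), i ≫ r = 𝟙 f →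
    cof g.hom → cof f.hom
  /-- lifting: cofibrations against acyclic fibrations -/
  lift_cof_trivFib : ∀ {A B X Y : C} (i : A ⟶ B) (p : X ⟶ Y),
    cof i → fib p → weq p → HasLiftingProperty i p
  /-- lifting: acyclic cofibrations against fibrations -/
  lift_trivCof_fib : ∀ {A B X Y : C} (i : A ⟶ B) (p : X ⟶ Y),
    cof i → weq i → fib p → HasLiftingProperty i p
  /-- factorization as a cofibration followed by an acyclic fibration -/
  fact_cof_trivFib : ∀ {X Y : C} (f : X ⟶ Y),
    ∃ (Z : C) (i : X ⟶ Z) (p : Z ⟶ Y), cof i ∧ fib p ∧ weq p ∧ i ≫ p = f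
  /-- factorization as an acyclic cofibration followed by a fibration -/
  fact_trivCof_fib : ∀ {X Y : C} (f : X ⟶ Y),
    ∃ (Z : C) (i : X ⟶ Z) (p : Z ⟶ Y), cof i ∧ weq i ∧ fib p ∧ i ≫ p = f


section Aux

variable {C : Type*} [Category C]

/-- Cofibrations are closed under composition (retract argument). -/
theorem ModelStructure.cof_comp (M : ModelStructure C) {X Y Z : C}
    {i : X ⟶ Y} {j : Y ⟶ Z} (hi : M.cof i) (hj : M.cof j) : M.cof (i ≫ j) := by
  obtain ⟨W, k, p, hk, hp, hpw, hfac⟩ := M.fact_cof_trivFib (i ≫ j)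
  have : HasLiftingProperty (i ≫ j) p := by
    have := M.lift_cof_trivFib i p hi hp hpw
    have := M.lift_cof_trivFib j p hj hp hpw
    infer_instance
  have sq : CommSq k (i ≫ j) p (𝟙 Z) := ⟨by simp [hfac]⟩
  obtain ⟨⟨l⟩⟩ := this.sq_hasLift sq
  refine M.cof_retract (f := Arrow.mk (i ≫ j)) (g := Arrow.mk k)
      (Arrow.homMk (u := 𝟙 X) (v := l.l) (by simp [l.fac_left]))
      (Arrow.homMk (u := 𝟙 X) (v := p) (by simp [hfac])) ?_ hk
  ext
  · simp
  · exact l.fac_right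

end Aux

open ZeroObject

/-- An object is cofibrant if the unique map from the zero (initial) object is
a cofibration. -/
def ModelStructure.Cofibrant {C : Type*} [Category C] [HasZeroObject C]
    [HasZeroMorphisms C] (M : ModelStructure C) (X : C) : Prop :=
  M.cof (0 : (0 : C) ⟶ X)

/-- In a pointed model category with binary (co)products in which
(i) `X ⨿ Y ⟶ X ⨯ Y` is a weak equivalence for cofibrant `X`, `Y`,
(ii) products of acyclic fibrations are weak equivalences, and
(iii) coproducts of acyclic cofibrations are weak equivalences,
maps `f : A ⟶ B` and `g : X ⟶ Y` with `A`, `X` cofibrant are both weak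
equivalences iff `prod.map f g` is a weak equivalence. -/
theorem weq_prodMap_iff {C : Type*} [Category C] [HasZeroObject C]
    [HasZeroMorphisms C] [HasBinaryProducts C] [HasBinaryCoproducts C]
    (M : ModelStructure C)
    (h1 : ∀ X Y : C, M.Cofibrant X → M.Cofibrant Y →
      M.weq (coprod.desc (prod.lift (𝟙 X) 0) (prod.lift 0 (𝟙 Y)) : X ⨿ Y ⟶ X ⨯ Y))
    (h2 : ∀ {A B X Y : C} (f : A ⟶ B) (g : X ⟶ Y),
      M.fib f → M.weq f → M.fib g → M.weq g → M.weq (prod.map f g))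
    (h3 : ∀ {A B X Y : C} (f : A ⟶ B) (g : X ⟶ Y),
      M.cof f → M.weq f → M.cof g → M.weq g → M.weq (coprod.map f g))
    {A B X Y : C} (f : A ⟶ B) (g : X ⟶ Y)
    (hA : M.Cofibrant A) (hX : M.Cofibrant X) :
    (M.weq f ∧ M.weq g) ↔ M.weq (prod.map f g) := by
  have key : ∀ {A' B' X' Y' : C} (i : A' ⟶ B') (j : X' ⟶ Y'),
      M.Cofibrant A' → M.Cofibrant X' → M.cof i → M.weq i → M.cof j → M.weq j →
      M.weq (prod.map i j) := by
    intro A' B' X' Y' i j hA' hX' hci hwi hcj hwj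
    have hB' : M.Cofibrant B' := by
      have := M.cof_comp hA' hci
      simpa [ModelStructure.Cofibrant] using this
    have hY' : M.Cofibrant Y' := by
      have := M.cof_comp hX' hcj
      simpa [ModelStructure.Cofibrant] using this
    have w1 := h1 A' X' hA' hX'
    have w1' := h1 B' Y' hB' hY'
    have w3 := h3 i j hci hwi hcj hwj
    have eq : (coprod.desc (prod.lift (𝟙 A') 0) (prod.lift 0 (𝟙 X')) : A' ⨿ X' ⟶ A' ⨯ X')
        ≫ prod.map i j
        = coprod.map i j ≫ coprod.desc (prod.lift (𝟙 B') 0) (prod.lift 0 (𝟙 Y')) := by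
      apply coprod.hom_ext <;> apply Limits.prod.hom_ext <;> simp
    exact M.weq_of_comp_right _ _ w1 (by rw [eq]; exact M.weq_comp _ _ w3 w1')
  obtain ⟨A', i, p, hci, hwi, hfp, hf⟩ := M.fact_trivCof_fib f
  obtain ⟨X', j, q, hcj, hwj, hfq, hg⟩ := M.fact_trivCof_fib g
  have hwij := key i j hA hX hci hwi hcj hwj
  have hmap : prod.map f g = prod.map i j ≫ prod.map p q := by
    rw [prod.map_map, hf, hg]
  constructor
  · rintro ⟨hwf, hwg⟩
    have hwp : M.weq p := M.weq_of_comp_right i p hwi (by rw [hf]; exact hwf)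
    have hwq : M.weq q := M.weq_of_comp_right j q hwj (by rw [hg]; exact hwg)
    rw [hmap]
    exact M.weq_comp _ _ hwij (h2 p q hfp hwp hfq hwq)
  · intro hw
    have hwpq : M.weq (prod.map p q) :=
      M.weq_of_comp_right _ _ hwij (by rw [← hmap]; exact hw)
    have hwp : M.weq p := by
      refine M.weq_retract (f := Arrow.mk p) (g := Arrow.mk (prod.map p q))
        (Arrow.homMk (u := prod.lift (𝟙 A') 0) (v := prod.lift (𝟙 B) 0)
          (by apply Limits.prod.hom_ext <;> simp))
        (Arrow.homMk (u := prod.fst) (v := prod.fst) (by simp)) ?_ hwpq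
      ext <;> simp <;> exact prod.lift_fst _ _
    have hwq : M.weq q := by
      refine M.weq_retract (f := Arrow.mk q) (g := Arrow.mk (prod.map p q))
        (Arrow.homMk (u := prod.lift 0 (𝟙 X')) (v := prod.lift 0 (𝟙 Y))
          (by apply Limits.prod.hom_ext <;> simp))
        (Arrow.homMk (u := prod.snd) (v := prod.snd) (by simp)) ?_ hwpq
      ext <;> simp <;> exact prod.lift_snd _ _
    exact ⟨by rw [← hf]; exact M.weq_comp _ _ hwi hwp,
      by rw [← hg]; exact M.weq_comp _ _ hwj hwq⟩
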